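/- arXiv:1604.00261 — 3 statements merged into one kernel-verified Lean document; each statement's English description precedes it below -/
import Mathlib

section
/- Let Q_m(f) = ∑_{i=1}^m a_i f(t_i) be a univariate quadrature rule with nodes t_i ∈ [0,1] and weights a_i ∈ ℝ, exact on constants (∑ a_i = 1), with worst case error e₁ = sup{|∫₀¹ f − Q_m(f)| : f ∈ C^r([0,1]), ‖f‖_{C^r} ≤ 1} over the unit ball of C^r([0,1]). Let A = ∑_{i=1}^m |a_i| and let Q_m^d be the d-fold tensor product rule. Then the worst case error of Q_m^d over the unit ball of C^r([0,1]^d) (all partial derivatives of total order ≤ r bounded by 1 in sup-norm) is at most (∑_{j=0}^{d−1} A^j)·e₁. In particular, if all a_i ≥ 0 then the error is at most d·e₁. -/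
open MeasureTheory

/-- Iterated partial derivative along a list of coordinate directions
(a multi-index of total order the length of the list). -/
noncomputable def derivAlong {d : ℕ} : List (Fin d) → ((Fin d → ℝ) → ℝ) → (Fin d → ℝ) → ℝ
  | [], φ => φ
  | j :: L, φ => fun x => fderiv ℝ (derivAlong L φ) x (Pi.single j 1)

/-- The unit ball of C^r([0,1]^d): r-times continuously differentiable functions
whose partial derivatives of total order ≤ r are bounded by 1 on the cube. -/
def CrUnitBall (d r : ℕ) : Set ((Fin d → ℝ) → ℝ) :=
  {f | ContDiff ℝ r f ∧ ∀ L : List (Fin d), L.length ≤ r →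
    ∀ x ∈ Set.Icc (0 : Fin d → ℝ) 1, |derivAlong L f x| ≤ 1}

/-! ### Auxiliary lemmas -/

theorem derivAlong_contDiff {d r : ℕ} {f : (Fin d → ℝ) → ℝ} (hf : ContDiff ℝ r f) :
    ∀ L : List (Fin d), L.length ≤ r → ContDiff ℝ ((r - L.length : ℕ)) (derivAlong L f) := by
  intro L
  induction L with
  | nil => intro _; simpa [derivAlong] using hf
  | cons j L ih =>
    intro h
    have hlen : L.length < r := Nat.lt_of_succ_le (by simpa using h)
    have h1 : ContDiff ℝ ((r - (j :: L).length : ℕ)) (fderiv ℝ (derivAlong L f)) := by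
      refine (ih hlen.le).fderiv_right ?_
      norm_cast
      simp only [List.length_cons]
      omega
    show ContDiff ℝ _ fun x => fderiv ℝ (derivAlong L f) x (Pi.single j 1)
    exact h1.clm_apply contDiff_const

theorem derivAlong_differentiable {d r : ℕ} {f : (Fin d → ℝ) → ℝ} (hf : ContDiff ℝ r f)
    (L : List (Fin d)) (h : L.length < r) : Differentiable ℝ (derivAlong L f) := by
  refine (derivAlong_contDiff hf L h.le).differentiable ?_
  norm_cast
  omega

/-- The embedding `y ↦ Fin.cons 0 y` as a continuous linear map. -/
noncomputable def consCLM (d : ℕ) : (Fin d → ℝ) →L[ℝ] (Fin (d+1) → ℝ) :=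
  ContinuousLinearMap.pi (fun j : Fin (d+1) =>
    Fin.cases 0 (fun i => ContinuousLinearMap.proj i) j)

theorem consCLM_apply (d : ℕ) (y : Fin d → ℝ) : consCLM d y = Fin.cons 0 y := by
  funext j
  induction j using Fin.cases with
  | zero => simp [consCLM]
  | succ i => simp [consCLM]

theorem hasFDerivAt_cons (d : ℕ) (x0 : ℝ) (y : Fin d → ℝ) :
    HasFDerivAt (fun y : Fin d → ℝ => (Fin.cons x0 y : Fin (d+1) → ℝ)) (consCLM d) y := by
  have : (fun y : Fin d → ℝ => (Fin.cons x0 y : Fin (d+1) → ℝ))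
      = fun y => (Fin.cons x0 0 : Fin (d+1) → ℝ) + consCLM d y := by
    funext y j
    induction j using Fin.cases with
    | zero => simp [consCLM_apply]
    | succ i => simp [consCLM_apply]
  rw [this]
  exact (consCLM d).hasFDerivAt.const_add _

theorem contDiff_slice {d r : ℕ} {f : (Fin (d+1) → ℝ) → ℝ} (hf : ContDiff ℝ r f) (x0 : ℝ) :
    ContDiff ℝ r (fun y : Fin d → ℝ => f (Fin.cons x0 y)) := by
  have h : ContDiff ℝ r (fun y : Fin d → ℝ => (Fin.cons x0 y : Fin (d+1) → ℝ)) := by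
    have : (fun y : Fin d → ℝ => (Fin.cons x0 y : Fin (d+1) → ℝ))
        = fun y => (Fin.cons x0 0 : Fin (d+1) → ℝ) + consCLM d y := by
      funext y j
      induction j using Fin.cases with
      | zero => simp [consCLM_apply]
      | succ i => simp [consCLM_apply]
    rw [this]
    exact contDiff_const.add ((consCLM d).contDiff)
  exact hf.comp h

theorem single_succ_eq {d : ℕ} (j : Fin d) :
    (Pi.single j.succ 1 : Fin (d+1) → ℝ) = Fin.cons 0 (Pi.single j 1) := by
  funext k
  induction k using Fin.cases with
  | zero => simp [Pi.single_eq_of_ne (Fin.succ_ne_zero j).symm]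
  | succ i =>
    rcases eq_or_ne i j with rfl | h
    · simp
    · simp [Pi.single_eq_of_ne h, Pi.single_eq_of_ne (fun hh => h (Fin.succ_injective _ hh))]

theorem fderiv_slice {d : ℕ} {H : (Fin (d+1) → ℝ) → ℝ} (hH : Differentiable ℝ H)
    (x0 : ℝ) (y : Fin d → ℝ) (j : Fin d) :
    fderiv ℝ (fun y => H (Fin.cons x0 y)) y (Pi.single j 1)
      = fderiv ℝ H (Fin.cons x0 y) (Pi.single j.succ 1) := by
  have h := ((hH (Fin.cons x0 y)).hasFDerivAt.comp y (hasFDerivAt_cons d x0 y)).fderiv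
  rw [show (fun y => H (Fin.cons x0 y))
      = H ∘ (fun y : Fin d → ℝ => (Fin.cons x0 y : Fin (d+1) → ℝ)) from rfl, h]
  simp only [ContinuousLinearMap.comp_apply, consCLM_apply, single_succ_eq]

theorem hasDerivAt_cons (d : ℕ) (c : Fin d → ℝ) (s : ℝ) :
    HasDerivAt (fun s : ℝ => (Fin.cons s c : Fin (d+1) → ℝ)) (Pi.single 0 1) s := by
  have : (fun s : ℝ => (Fin.cons s c : Fin (d+1) → ℝ))
      = fun s => s • (Pi.single 0 1 : Fin (d+1) → ℝ) + Fin.cons 0 c := by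
    funext s j
    induction j using Fin.cases with
    | zero => simp
    | succ i => simp [Pi.single_eq_of_ne (Fin.succ_ne_zero i)]
  rw [this]
  simpa using ((hasDerivAt_id s).smul_const (Pi.single 0 1 : Fin (d+1) → ℝ)).add_const
    (Fin.cons 0 c)

theorem contDiff_cons_line {d : ℕ} (r : ℕ) (c : Fin d → ℝ) :
    ContDiff ℝ r (fun s : ℝ => (Fin.cons s c : Fin (d+1) → ℝ)) := by
  have : (fun s : ℝ => (Fin.cons s c : Fin (d+1) → ℝ))
      = fun s => s • (Pi.single 0 1 : Fin (d+1) → ℝ) + Fin.cons 0 c := by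
    funext s j
    induction j using Fin.cases with
    | zero => simp
    | succ i => simp [Pi.single_eq_of_ne (Fin.succ_ne_zero i)]
  rw [this]
  exact (contDiff_id.smul contDiff_const).add contDiff_const

theorem deriv_slice {d : ℕ} {H : (Fin (d+1) → ℝ) → ℝ} (hH : Differentiable ℝ H)
    (c : Fin d → ℝ) (s : ℝ) :
    deriv (fun s => H (Fin.cons s c)) s = fderiv ℝ H (Fin.cons s c) (Pi.single 0 1) :=
  ((hH (Fin.cons s c)).hasFDerivAt.comp_hasDerivAt s (hasDerivAt_cons d c s)).deriv

theorem derivAlong_slice {d r : ℕ} {f : (Fin (d+1) → ℝ) → ℝ} (hf : ContDiff ℝ r f) (x0 : ℝ) :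
    ∀ L : List (Fin d), L.length ≤ r →
      derivAlong L (fun y => f (Fin.cons x0 y))
        = fun y => derivAlong (L.map Fin.succ) f (Fin.cons x0 y) := by
  intro L
  induction L with
  | nil => intro _; rfl
  | cons j L ih =>
    intro h
    have hlen : L.length < r := Nat.lt_of_succ_le (by simpa using h)
    funext y
    show fderiv ℝ (derivAlong L (fun y => f (Fin.cons x0 y))) y (Pi.single j 1) = _
    rw [ih hlen.le]
    have hdiff : Differentiable ℝ (derivAlong (L.map Fin.succ) f) :=
      derivAlong_differentiable hf _ (by simpa using hlen)
    rw [fderiv_slice hdiff x0 y j]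
    rfl

theorem iteratedDeriv_sum_slice {d r : ℕ} {f : (Fin (d+1) → ℝ) → ℝ} (hf : ContDiff ℝ r f)
    {ι : Type*} [Fintype ι] (w : ι → ℝ) (c : ι → Fin d → ℝ) :
    ∀ k : ℕ, k ≤ r →
      iteratedDeriv k (fun s => ∑ i, w i * f (Fin.cons s (c i)))
        = fun s => ∑ i, w i * derivAlong (List.replicate k 0) f (Fin.cons s (c i)) := by
  intro k
  induction k with
  | zero => intro _; simp [derivAlong]
  | succ k ih =>
    intro h
    rw [iteratedDeriv_succ, ih (Nat.le_of_succ_le h)]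
    have hdiff : Differentiable ℝ (derivAlong (List.replicate k (0 : Fin (d+1))) f) :=
      derivAlong_differentiable hf _ (by simpa using h)
    funext s
    have hsum : HasDerivAt
        (fun s => ∑ i, w i * derivAlong (List.replicate k 0) f (Fin.cons s (c i)))
        (∑ i, w i * fderiv ℝ (derivAlong (List.replicate k 0) f) (Fin.cons s (c i))
          (Pi.single 0 1)) s := by
      refine HasDerivAt.fun_sum fun i _ => ?_
      exact HasDerivAt.const_mul (w i)
        ((hdiff _).hasFDerivAt.comp_hasDerivAt s (hasDerivAt_cons d (c i) s))
    rw [hsum.deriv]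
    simp only [List.replicate_succ]
    rfl

theorem continuous_cons_pair (d : ℕ) :
    Continuous (fun z : ℝ × (Fin d → ℝ) => (Fin.cons z.1 z.2 : Fin (d+1) → ℝ)) := by
  refine continuous_pi fun j => ?_
  induction j using Fin.cases with
  | zero => simpa using continuous_fst
  | succ i => simpa [Function.comp_def] using (continuous_apply i).comp continuous_snd

theorem integral_Icc_succ {d : ℕ} {f : (Fin (d+1) → ℝ) → ℝ} (hf : Continuous f) :
    ∫ x in Set.Icc (0 : Fin (d+1) → ℝ) 1, f x
      = ∫ s in Set.Icc (0:ℝ) 1, ∫ y in Set.Icc (0 : Fin d → ℝ) 1, f (Fin.cons s y) := by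
  set e := MeasurableEquiv.piFinSuccAbove (fun _ : Fin (d+1) => ℝ) 0 with he
  have hmp : MeasurePreserving e volume volume :=
    volume_preserving_piFinSuccAbove (fun _ : Fin (d+1) => ℝ) 0
  have hsymm : ∀ z : ℝ × (Fin d → ℝ), e.symm z = Fin.cons z.1 z.2 := by
    intro z
    simp [he, MeasurableEquiv.piFinSuccAbove_symm_apply, Fin.insertNthEquiv,
      Fin.insertNth_zero']
  have hpre : e ⁻¹' (Set.Icc (0:ℝ) 1 ×ˢ Set.Icc (0 : Fin d → ℝ) 1)
      = Set.Icc (0 : Fin (d+1) → ℝ) 1 := by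
    ext x
    simp only [Set.mem_preimage, Set.mem_prod, Set.mem_Icc, he,
      MeasurableEquiv.piFinSuccAbove_apply, Pi.le_def, Fin.succAbove_zero]
    constructor
    · rintro ⟨⟨h1, h2⟩, h3, h4⟩
      constructor
      · intro j
        induction j using Fin.cases with
        | zero => exact h1
        | succ i => simpa [Fin.tail] using h3 i
      · intro j
        induction j using Fin.cases with
        | zero => exact h2
        | succ i => simpa [Fin.tail] using h4 i
    · rintro ⟨h1, h2⟩
      exact ⟨⟨h1 0, h2 0⟩, fun i => by simpa [Fin.tail] using h1 i.succ, fun i => by simpa [Fin.tail] using h2 i.succ⟩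
  have key := hmp.setIntegral_preimage_emb e.measurableEmbedding
    (fun z => f (e.symm z)) (Set.Icc (0:ℝ) 1 ×ˢ Set.Icc (0 : Fin d → ℝ) 1)
  simp only [e.symm_apply_apply, hpre] at key
  rw [key]
  have hint : IntegrableOn (fun z : ℝ × (Fin d → ℝ) => f (e.symm z))
      (Set.Icc (0:ℝ) 1 ×ˢ Set.Icc (0 : Fin d → ℝ) 1) (volume.prod volume) := by
    have : (fun z : ℝ × (Fin d → ℝ) => f (e.symm z))
        = fun z => f (Fin.cons z.1 z.2) := by funext z; rw [hsymm]
    rw [this]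
    refine (hf.comp (continuous_cons_pair d)).continuousOn.integrableOn_compact ?_
    exact isCompact_Icc.prod isCompact_Icc
  rw [Measure.volume_eq_prod, setIntegral_prod _ hint]
  simp only [hsymm]

theorem integrableOn_slice_integral {d : ℕ} {f : (Fin (d+1) → ℝ) → ℝ} (hf : Continuous f) :
    IntegrableOn (fun s : ℝ => ∫ y in Set.Icc (0 : Fin d → ℝ) 1, f (Fin.cons s y))
      (Set.Icc (0:ℝ) 1) := by
  have hint : Integrable (fun z : ℝ × (Fin d → ℝ) => f (Fin.cons z.1 z.2))
      ((volume.restrict (Set.Icc (0:ℝ) 1)).prod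
        (volume.restrict (Set.Icc (0 : Fin d → ℝ) 1))) := by
    rw [Measure.prod_restrict]
    exact (hf.comp (continuous_cons_pair d)).continuousOn.integrableOn_compact
      (isCompact_Icc.prod isCompact_Icc)
  exact hint.integral_prod_left

theorem cons_mem_Icc {d : ℕ} {s : ℝ} {y : Fin d → ℝ} (hs : s ∈ Set.Icc (0:ℝ) 1)
    (hy : y ∈ Set.Icc (0 : Fin d → ℝ) 1) :
    (Fin.cons s y : Fin (d+1) → ℝ) ∈ Set.Icc (0 : Fin (d+1) → ℝ) 1 := by
  obtain ⟨hy1, hy2⟩ := hy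
  refine ⟨fun j => ?_, fun j => ?_⟩ <;>
    · induction j using Fin.cases with
      | zero => first | exact hs.1 | exact hs.2
      | succ i => first | exact hy1 i | exact hy2 i

/-- If a univariate quadrature rule Q_m with nodes t_i ∈ [0,1] and weights a_i (summing
to 1) has worst case error at most e₁ on the unit ball of C^r([0,1]), then its d-fold
tensor product rule has worst case error at most (∑_{j<d} A^j)·e₁ on the unit ball of
C^r([0,1]^d), where A = ∑|a_i|; in particular at most d·e₁ when all weights are ≥ 0. -/
theorem tensor_product_rule_error (d r m : ℕ) (hd : 1 ≤ d) (hm : 1 ≤ m)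
    (a t : Fin m → ℝ) (ht : ∀ i, t i ∈ Set.Icc (0 : ℝ) 1)
    (hsum : ∑ i, a i = 1)
    (e₁ : ℝ)
    (he₁ : ∀ f : ℝ → ℝ, ContDiff ℝ r f →
      (∀ k ≤ r, ∀ x ∈ Set.Icc (0 : ℝ) 1, |iteratedDeriv k f x| ≤ 1) →
      |(∫ x in (0 : ℝ)..1, f x) - ∑ i, a i * f (t i)| ≤ e₁)
    (A : ℝ) (hA : A = ∑ i, |a i|) :
    (∀ f ∈ CrUnitBall d r,
      |(∫ x in Set.Icc (0 : Fin d → ℝ) 1, f x) -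
          ∑ i : Fin d → Fin m, (∏ j, a (i j)) * f (fun j => t (i j))| ≤
        (∑ j ∈ Finset.range d, A ^ j) * e₁) ∧
    ((∀ i, 0 ≤ a i) → ∀ f ∈ CrUnitBall d r,
      |(∫ x in Set.Icc (0 : Fin d → ℝ) 1, f x) -
          ∑ i : Fin d → Fin m, (∏ j, a (i j)) * f (fun j => t (i j))| ≤ d * e₁) := by
  have hA1 : 1 ≤ A := by
    rw [hA]
    calc (1:ℝ) = |∑ i, a i| := by rw [hsum, abs_one]
    _ ≤ ∑ i, |a i| := Finset.abs_sum_le_sum_abs _ _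
  have hApos : 0 < A := lt_of_lt_of_le one_pos hA1
  have main : ∀ n : ℕ, ∀ f ∈ CrUnitBall n r,
      |(∫ x in Set.Icc (0 : Fin n → ℝ) 1, f x) -
          ∑ i : Fin n → Fin m, (∏ j, a (i j)) * f (fun j => t (i j))| ≤
        (∑ j ∈ Finset.range n, A ^ j) * e₁ := by
    intro n
    induction n with
    | zero =>
      intro f _
      have hIcc : Set.Icc (0 : Fin 0 → ℝ) 1 = Set.univ := by
        ext x
        simp only [Set.mem_Icc, Set.mem_univ, iff_true]
        exact ⟨le_of_eq (Subsingleton.elim _ _), le_of_eq (Subsingleton.elim _ _)⟩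
      have hfc : f = fun _ => f 0 := funext fun x => by rw [Subsingleton.elim x 0]
      have hvol : (volume : Measure (Fin 0 → ℝ)) Set.univ = 1 := by
        rw [volume_pi, Measure.pi_univ]
        simp
      rw [hIcc, Measure.restrict_univ]
      rw [hfc, integral_const, measureReal_def, hvol]
      rw [Fintype.sum_unique]
      simp [Subsingleton.elim (fun j : Fin 0 => t ((default : Fin 0 → Fin m) j)) 0]
    | succ n ihn =>
      intro f hf
      obtain ⟨hfC, hfB⟩ := hf
      have hcont : Continuous f := hfC.continuous
      set w : (Fin n → Fin m) → ℝ := fun i => ∏ j, a (i j) with hw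
      set c : (Fin n → Fin m) → (Fin n → ℝ) := fun i j => t (i j) with hc
      set G : ℝ → ℝ := fun s => ∑ i, w i * f (Fin.cons s (c i)) with hG
      set F : ℝ → ℝ := fun s => ∫ y in Set.Icc (0 : Fin n → ℝ) 1, f (Fin.cons s y) with hF
      set S : ℝ := ∑ j ∈ Finset.range n, A ^ j with hS
      set B : ℝ := A ^ n with hB
      have hBpos : 0 < B := pow_pos hApos n
      -- Fubini
      have hFub : ∫ x in Set.Icc (0 : Fin (n+1) → ℝ) 1, f x
          = ∫ s in Set.Icc (0:ℝ) 1, F s := integral_Icc_succ hcont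
      -- split the quadrature sum
      have hQ : (∑ i : Fin (n+1) → Fin m, (∏ j, a (i j)) * f (fun j => t (i j)))
          = ∑ i0 : Fin m, a i0 * G (t i0) := by
        rw [← Equiv.sum_comp (Fin.consEquiv fun _ : Fin (n+1) => Fin m)
          (fun i => (∏ j, a (i j)) * f (fun j => t (i j))), Fintype.sum_prod_type]
        refine Finset.sum_congr rfl fun i0 _ => ?_
        rw [hG, Finset.mul_sum]
        refine Finset.sum_congr rfl fun ii _ => ?_
        have e1 : (Fin.consEquiv fun _ : Fin (n+1) => Fin m) (i0, ii)
            = (Fin.cons i0 ii : Fin (n+1) → Fin m) := rfl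
        rw [e1]
        have h2 : (fun j => t ((Fin.cons i0 ii : Fin (n+1) → Fin m) j))
            = Fin.cons (t i0) (fun j => t (ii j)) := by
          funext j
          induction j using Fin.cases with
          | zero => simp
          | succ i => simp
        rw [h2, Fin.prod_univ_succ]
        simp only [Fin.cons_zero, Fin.cons_succ, hw, hc]
        ring
      -- slices and IH
      have hFG : ∀ s ∈ Set.Icc (0:ℝ) 1, |F s - G s| ≤ S * e₁ := by
        intro s hs
        have hslice : (fun y => f (Fin.cons s y)) ∈ CrUnitBall n r := by
          refine ⟨contDiff_slice hfC s, ?_⟩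
          intro L hL y hy
          rw [derivAlong_slice hfC s L hL]
          exact hfB (L.map Fin.succ) (by simpa using hL) _ (cons_mem_Icc hs hy)
        have h := ihn _ hslice
        simpa [hF, hG, hw, hc, hS] using h
      -- integrability
      have hFint : IntegrableOn F (Set.Icc (0:ℝ) 1) := integrableOn_slice_integral hcont
      have hGcont : Continuous G := by
        refine continuous_finset_sum _ fun i _ => ?_
        exact continuous_const.mul (hcont.comp ((contDiff_cons_line r (c i)).continuous))
      have hGint : IntegrableOn G (Set.Icc (0:ℝ) 1) :=
        hGcont.continuousOn.integrableOn_compact isCompact_Icc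
      -- first error term
      have h1 : |(∫ s in Set.Icc (0:ℝ) 1, F s) - ∫ s in Set.Icc (0:ℝ) 1, G s| ≤ S * e₁ := by
        rw [← integral_sub hFint hGint]
        have hvol : (volume (Set.Icc (0:ℝ) 1)) < ⊤ := by
          simp [Real.volume_Icc]
        have := norm_setIntegral_le_of_norm_le_const (μ := volume) (C := S * e₁) hvol
          (f := fun s => F s - G s)
          (fun x hx => by simpa [Real.norm_eq_abs] using hFG x hx)
        simpa [Real.norm_eq_abs, Real.volume_Icc, Real.volume_real_Icc] using this
      -- sum of absolute weights
      have hwsum : ∑ i : Fin n → Fin m, |w i| = B := by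
        have habs : ∀ i : Fin n → Fin m, |w i| = ∏ j, |a (i j)| := by
          intro i; rw [hw]; exact Finset.abs_prod _ _
        simp only [habs]
        rw [hB, hA, Finset.sum_pow', Fintype.piFinset_univ]
      -- derivative bounds for G
      have hGd : ∀ k ≤ r, ∀ x ∈ Set.Icc (0:ℝ) 1, |iteratedDeriv k G x| ≤ B := by
        intro k hk x hx
        rw [hG, iteratedDeriv_sum_slice hfC w c k hk]
        calc |∑ i, w i * derivAlong (List.replicate k 0) f (Fin.cons x (c i))|
            ≤ ∑ i, |w i * derivAlong (List.replicate k 0) f (Fin.cons x (c i))| :=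
              Finset.abs_sum_le_sum_abs _ _
          _ ≤ ∑ i : Fin n → Fin m, |w i| := by
              refine Finset.sum_le_sum fun i _ => ?_
              rw [abs_mul]
              have hmem : (Fin.cons x (c i) : Fin (n+1) → ℝ) ∈ Set.Icc (0 : Fin (n+1) → ℝ) 1 := by
                refine cons_mem_Icc hx ⟨fun j => (ht (i j)).1, fun j => (ht (i j)).2⟩
              have := hfB (List.replicate k 0) (by simpa using hk) _ hmem
              nlinarith [abs_nonneg (w i), abs_nonneg
                (derivAlong (List.replicate k 0) f (Fin.cons x (c i)))]
          _ = B := hwsum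
      -- apply the univariate bound to B⁻¹ • G
      have hGC : ContDiff ℝ r G := by
        refine ContDiff.sum fun i _ => ?_
        exact contDiff_const.mul (hfC.comp (contDiff_cons_line r (c i)))
      have hg0C : ContDiff ℝ r (fun s => B⁻¹ * G s) := contDiff_const.mul hGC
      have hg0eq : ∀ k ≤ r, iteratedDeriv k (fun s => B⁻¹ * G s)
          = fun s => B⁻¹ * iteratedDeriv k G s := by
        intro k hk
        have h1 := iteratedDeriv_sum_slice hfC (fun i => B⁻¹ * w i) c k hk
        have h2 := iteratedDeriv_sum_slice hfC w c k hk
        have h3 : (fun s => ∑ i, (B⁻¹ * w i) * f (Fin.cons s (c i)))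
            = fun s => B⁻¹ * G s := by
          funext s
          rw [hG, Finset.mul_sum]
          exact Finset.sum_congr rfl fun i _ => by ring
        rw [← h3, h1, hG, h2]
        funext s
        rw [Finset.mul_sum]
        exact Finset.sum_congr rfl fun i _ => by ring
      have hg0 := he₁ (fun s => B⁻¹ * G s) hg0C (by
        intro k hk x hx
        rw [hg0eq k hk]
        rw [abs_mul, abs_inv, abs_of_pos hBpos]
        rw [inv_mul_le_iff₀ hBpos, mul_one]
        exact hGd k hk x hx)
      have hX : |(∫ x in (0:ℝ)..1, G x) - ∑ i, a i * G (t i)| ≤ B * e₁ := by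
        have heq : (∫ x in (0:ℝ)..1, B⁻¹ * G x) - ∑ i, a i * (B⁻¹ * G (t i))
            = B⁻¹ * ((∫ x in (0:ℝ)..1, G x) - ∑ i, a i * G (t i)) := by
          rw [mul_sub]
          congr 1
          · exact intervalIntegral.integral_const_mul B⁻¹ G
          · rw [Finset.mul_sum]
            exact Finset.sum_congr rfl fun i _ => by ring
        rw [heq, abs_mul, abs_inv, abs_of_pos hBpos, inv_mul_le_iff₀ hBpos] at hg0
        linarith [hg0]
      have hGI : ∫ s in Set.Icc (0:ℝ) 1, G s = ∫ x in (0:ℝ)..1, G x := by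
        rw [intervalIntegral.integral_of_le zero_le_one, integral_Icc_eq_integral_Ioc]
      -- put it together
      rw [hFub, hQ]
      have hdecomp : (∫ s in Set.Icc (0:ℝ) 1, F s) - ∑ i0 : Fin m, a i0 * G (t i0)
          = ((∫ s in Set.Icc (0:ℝ) 1, F s) - ∫ s in Set.Icc (0:ℝ) 1, G s)
            + ((∫ x in (0:ℝ)..1, G x) - ∑ i0 : Fin m, a i0 * G (t i0)) := by
        rw [← hGI]; ring
      rw [hdecomp, Finset.sum_range_succ]
      calc |_ + _| ≤ _ + _ := abs_add_le _ _
        _ ≤ S * e₁ + B * e₁ := add_le_add h1 hX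
        _ = (S + A ^ n) * e₁ := by rw [hB]; ring
  refine ⟨main d, ?_⟩
  intro hpos f hf
  have hA1' : A = 1 := by
    rw [hA, ← hsum]
    exact Finset.sum_congr rfl fun i _ => abs_of_nonneg (hpos i)
  have := main d f hf
  rw [hA1'] at this
  simpa using this
end

section
/- For every n ∈ ℕ and every quadrature rule A_n(f) = ∑_{i=1}^n a_i f(x_i) with n nodes on [0,1], the worst case error over the class of 1-Lipschitz functions on [0,1] is at least 1/(4n). Consequently the midpoint rule with n nodes is optimal for this class. -/
-- integral of |s - m| over [a,b] with a ≤ m ≤ b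
lemma my_integral_abs_sub {a m b : ℝ} (h1 : a ≤ m) (h2 : m ≤ b) :
    ∫ s in a..b, |s - m| = ((m - a)^2 + (b - m)^2) / 2 := by
  have hint : ∀ u v : ℝ, IntervalIntegrable (fun s => |s - m|) MeasureTheory.volume u v :=
    fun u v => Continuous.intervalIntegrable (by continuity) u v
  rw [← intervalIntegral.integral_add_adjacent_intervals (hint a m) (hint m b)]
  have e1 : (∫ s in a..m, |s - m|) = (m - a)^2 / 2 := by
    rw [intervalIntegral.integral_congr (g := fun s => m - s) ?_]
    · rw [intervalIntegral.integral_sub intervalIntegrable_const intervalIntegral.intervalIntegrable_id]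
      simp [integral_id]
      ring
    · intro s hs
      rw [Set.uIcc_of_le h1] at hs
      show |s - m| = m - s
      rw [abs_of_nonpos (by linarith [hs.2])]; ring
  have e2 : (∫ s in m..b, |s - m|) = (b - m)^2 / 2 := by
    rw [intervalIntegral.integral_congr (g := fun s => s - m) ?_]
    · rw [intervalIntegral.integral_sub intervalIntegral.intervalIntegrable_id intervalIntegrable_const]
      simp [integral_id]
      ring
    · intro s hs
      rw [Set.uIcc_of_le h2] at hs
      exact abs_of_nonneg (by linarith [hs.1])
  rw [e1, e2]; ring

lemma my_tent_integral {c : ℝ} (hc0 : 0 ≤ c) (hc1 : c ≤ 1) :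
    ∫ u in (-1:ℝ)..1, max 0 (c - |u|) = c^2 := by
  have hint : ∀ u v : ℝ, IntervalIntegrable (fun s => max 0 (c - |s|)) MeasureTheory.volume u v :=
    fun u v => Continuous.intervalIntegrable
      (continuous_const.max (continuous_const.sub continuous_abs)) u v
  have half : (∫ u in (0:ℝ)..1, max 0 (c - |u|)) = c^2 / 2 := by
    rw [← intervalIntegral.integral_add_adjacent_intervals (hint 0 c) (hint c 1)]
    have e1 : (∫ u in (0:ℝ)..c, max 0 (c - |u|)) = c^2 / 2 := by
      rw [intervalIntegral.integral_congr (g := fun u => c - u) ?_]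
      · rw [intervalIntegral.integral_sub intervalIntegrable_const
          intervalIntegral.intervalIntegrable_id]
        simp [integral_id]
        ring
      · intro u hu
        rw [Set.uIcc_of_le hc0] at hu
        show max 0 (c - |u|) = c - u
        rw [abs_of_nonneg hu.1, max_eq_right (by linarith [hu.2])]
    have e2 : (∫ u in c..(1:ℝ), max 0 (c - |u|)) = 0 := by
      rw [intervalIntegral.integral_congr (g := fun _ => (0:ℝ)) ?_]
      · simp
      · intro u hu
        rw [Set.uIcc_of_le hc1] at hu
        show max 0 (c - |u|) = 0
        rw [abs_of_nonneg (hc0.trans hu.1), max_eq_left (by linarith [hu.1])]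
    rw [e1, e2]; ring
  have neg : (∫ u in (-1:ℝ)..0, max 0 (c - |u|)) = c^2 / 2 := by
    have := intervalIntegral.integral_comp_neg (a := (0:ℝ)) (b := 1)
      (fun s => max 0 (c - |s|))
    simp only [neg_zero, neg_neg, abs_neg] at this
    exact this.symm.trans half
  rw [← intervalIntegral.integral_add_adjacent_intervals (hint (-1) 0) (hint 0 1), half, neg]
  ring

lemma my_midpoint (n : ℕ) (hn : 1 ≤ n) (g : ℝ → ℝ)
    (hg : ∀ y ∈ Set.Icc (0:ℝ) 1, ∀ z ∈ Set.Icc (0:ℝ) 1, |g y - g z| ≤ |y - z|) :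
    |(∫ s in (0:ℝ)..1, g s) -
        (1 / n) * ∑ i ∈ Finset.range n, g ((2 * i + 1) / (2 * n))| ≤ 1 / (4 * n) := by
  have hN : (0:ℝ) < n := by exact_mod_cast hn
  have hcont : ContinuousOn g (Set.Icc 0 1) := by
    have : LipschitzOnWith 1 g (Set.Icc 0 1) := by
      rw [lipschitzOnWith_iff_dist_le_mul]
      intro y hy z hz
      rw [Real.dist_eq, Real.dist_eq]
      simpa using hg y hy z hz
    exact this.continuousOn
  have hsub : ∀ i : ℕ, i < n → Set.uIcc ((i:ℝ)/n) (((i:ℝ)+1)/n) ⊆ Set.Icc 0 1 := by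
    intro i hi
    have hi' : ((i:ℝ)+1) ≤ n := by exact_mod_cast hi
    have h1 : ((i:ℝ))/n ≤ ((i:ℝ)+1)/n := by gcongr; linarith
    rw [Set.uIcc_of_le h1]
    exact Set.Icc_subset_Icc (by positivity) (by rw [div_le_one hN]; exact hi')
  have hgint : ∀ i : ℕ, i < n →
      IntervalIntegrable g MeasureTheory.volume ((i:ℝ)/n) (((i:ℝ)+1)/n) :=
    fun i hi => (hcont.mono (hsub i hi)).intervalIntegrable
  have hsum := intervalIntegral.sum_integral_adjacent_intervals
      (f := g) (μ := MeasureTheory.volume) (a := fun k : ℕ => (k:ℝ)/n) (n := n)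
      (fun k hk => by push_cast; exact hgint k hk)
  simp only [Nat.cast_zero, zero_div, div_self hN.ne'] at hsum
  push_cast at hsum
  -- per interval bound
  have key : ∀ i ∈ Finset.range n,
      |(∫ s in ((i:ℝ)/n)..(((i:ℝ)+1)/n), g s) - (1/(n:ℝ)) * g ((2*i+1)/(2*n))|
        ≤ 1/(4*(n:ℝ)^2) := by
    intro i hi
    rw [Finset.mem_range] at hi
    set α : ℝ := (i:ℝ)/n with hα
    set β : ℝ := ((i:ℝ)+1)/n with hβ
    set m : ℝ := (2*(i:ℝ)+1)/(2*n) with hm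
    have hmα : m - α = 1/(2*n) := by rw [hm, hα]; field_simp; ring
    have hβm : β - m = 1/(2*n) := by rw [hβ, hm]; field_simp; ring
    have h2n : (0:ℝ) < 2*n := by linarith
    have hpos : (0:ℝ) < 1/(2*(n:ℝ)) := by positivity
    have hαm : α ≤ m := by linarith
    have hmβ : m ≤ β := by linarith
    have hαβ : α ≤ β := hαm.trans hmβ
    have hmem : ∀ s ∈ Set.Icc α β, s ∈ Set.Icc (0:ℝ) 1 := by
      intro s hs
      exact hsub i hi (by rw [Set.uIcc_of_le hαβ]; exact hs)
    have hmIcc : m ∈ Set.Icc (0:ℝ) 1 := hmem m ⟨hαm, hmβ⟩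
    have hgc : ContinuousOn g (Set.uIcc α β) := hcont.mono (hsub i hi)
    have hint1 : IntervalIntegrable (fun s => |g s - g m|) MeasureTheory.volume α β :=
      ((hgc.sub continuousOn_const).abs).intervalIntegrable
    have hint2 : IntervalIntegrable (fun s => |s - m|) MeasureTheory.volume α β :=
      Continuous.intervalIntegrable (by continuity) α β
    have hconst : (1/(n:ℝ)) * g m = ∫ _ in α..β, g m := by
      rw [intervalIntegral.integral_const, smul_eq_mul]
      congr 1
      rw [hβ, hα]; field_simp; ring
    rw [hconst, ← intervalIntegral.integral_sub (hgint i hi) intervalIntegrable_const]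
    calc |∫ s in α..β, (g s - g m)| ≤ ∫ s in α..β, |g s - g m| :=
          intervalIntegral.abs_integral_le_integral_abs hαβ
      _ ≤ ∫ s in α..β, |s - m| := by
          apply intervalIntegral.integral_mono_on hαβ hint1 hint2
          intro s hs
          exact hg s (hmem s hs) m hmIcc
      _ = ((m - α)^2 + (β - m)^2)/2 := my_integral_abs_sub hαm hmβ
      _ = 1/(4*(n:ℝ)^2) := by rw [hmα, hβm]; field_simp; ring
  calc |(∫ s in (0:ℝ)..1, g s) - (1/n) * ∑ i ∈ Finset.range n, g ((2*i+1)/(2*n))|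
      = |∑ i ∈ Finset.range n,
          ((∫ s in ((i:ℝ)/n)..(((i:ℝ)+1)/n), g s) - (1/(n:ℝ)) * g ((2*i+1)/(2*n)))| := by
        rw [Finset.sum_sub_distrib, hsum, ← Finset.mul_sum]
    _ ≤ ∑ i ∈ Finset.range n,
          |(∫ s in ((i:ℝ)/n)..(((i:ℝ)+1)/n), g s) - (1/(n:ℝ)) * g ((2*i+1)/(2*n))| :=
        Finset.abs_sum_le_sum_abs _ _
    _ ≤ ∑ _i ∈ Finset.range n, 1/(4*(n:ℝ)^2) := Finset.sum_le_sum key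
    _ = 1/(4*n) := by
        rw [Finset.sum_const, Finset.card_range, nsmul_eq_mul]
        field_simp

lemma my_lower (n : ℕ) (hn : 1 ≤ n) (x a : Fin n → ℝ)
    (hx : ∀ i, x i ∈ Set.Icc (0:ℝ) 1) :
    ∃ f : ℝ → ℝ, (∀ y z : ℝ, |f y - f z| ≤ |y - z|) ∧
      1 / (4 * n) ≤ |(∫ s in (0:ℝ)..1, f s) - ∑ i, a i * f (x i)| := by
  have hN : (0:ℝ) < n := by exact_mod_cast hn
  haveI : NeZero n := ⟨by omega⟩
  have hne : (Finset.univ : Finset (Fin n)).Nonempty := Finset.univ_nonempty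
  set f : ℝ → ℝ := fun t => Finset.univ.inf' hne (fun i => |t - x i|) with hf
  have hfle : ∀ t i, f t ≤ |t - x i| := fun t i => Finset.inf'_le _ (Finset.mem_univ i)
  have hfnn : ∀ t, 0 ≤ f t := fun t => Finset.le_inf' hne _ (fun i _ => abs_nonneg _)
  have haux : ∀ y z : ℝ, f y ≤ f z + |y - z| := by
    intro y z
    obtain ⟨j, -, hj⟩ := Finset.exists_mem_eq_inf' hne (fun i => |z - x i|)
    calc f y ≤ |y - x j| := hfle y j
      _ ≤ |y - z| + |z - x j| := abs_sub_le y z (x j)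
      _ = f z + |y - z| := by
          have hz : f z = |z - x j| := hj
          rw [hz]; ring
  have hLip : ∀ y z : ℝ, |f y - f z| ≤ |y - z| := by
    intro y z
    rw [abs_sub_le_iff]
    constructor
    · linarith [haux y z]
    · rw [abs_sub_comm]; linarith [haux z y]
  have hf0 : ∀ i, f (x i) = 0 := by
    intro i
    refine le_antisymm ?_ (hfnn _)
    simpa using hfle (x i) i
  have hcont : Continuous f := by
    have : LipschitzWith 1 f := by
      apply LipschitzWith.of_dist_le_mul
      intro y z
      rw [Real.dist_eq, Real.dist_eq, NNReal.coe_one, one_mul]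
      exact hLip y z
    exact this.continuous
  set c : ℝ := 1/(2*(n:ℝ)) with hc
  have hc0 : 0 ≤ c := by positivity
  have hc1 : c ≤ 1 := by
    have hN1 : (1:ℝ) ≤ n := by exact_mod_cast hn
    rw [hc, div_le_one (by linarith)]
    linarith
  -- pointwise lower bound
  have hpt : ∀ s : ℝ, c - ∑ i, max 0 (c - |s - x i|) ≤ min (f s) c := by
    intro s
    rcases le_or_gt c (f s) with h | h
    · rw [min_eq_right h]
      have : (0:ℝ) ≤ ∑ i, max 0 (c - |s - x i|) :=
        Finset.sum_nonneg fun i _ => le_max_left _ _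
      linarith
    · rw [min_eq_left h.le]
      obtain ⟨j, -, hj⟩ := Finset.exists_mem_eq_inf' hne (fun i => |s - x i|)
      have hsj : |s - x j| = f s := hj.symm
      have hjle : max 0 (c - |s - x j|) ≤ ∑ i, max 0 (c - |s - x i|) :=
        Finset.single_le_sum (f := fun i => max 0 (c - |s - x i|))
          (fun i _ => le_max_left _ _) (Finset.mem_univ j)
      have : max 0 (c - |s - x j|) = c - f s := by
        rw [hsj, max_eq_right (by linarith)]
      linarith
  -- continuity / integrability
  have htentc : ∀ i, Continuous (fun s : ℝ => max 0 (c - |s - x i|)) := fun i =>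
    continuous_const.max (continuous_const.sub ((continuous_id.sub continuous_const).abs))
  have hsumc : Continuous (fun s : ℝ => ∑ i, max 0 (c - |s - x i|)) :=
    continuous_finset_sum _ fun i _ => htentc i
  have hminc : Continuous (fun s : ℝ => min (f s) c) := hcont.min continuous_const
  -- each tent integral over [0,1] is at most c^2
  have htent : ∀ i, (∫ s in (0:ℝ)..1, max 0 (c - |s - x i|)) ≤ c^2 := by
    intro i
    have h1 : x i - 1 ≤ 0 := by linarith [(hx i).2]
    have h2 : (1:ℝ) ≤ x i + 1 := by linarith [(hx i).1]
    have hmono : (∫ s in (0:ℝ)..1, max 0 (c - |s - x i|))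
        ≤ ∫ s in (x i - 1)..(x i + 1), max 0 (c - |s - x i|) := by
      apply intervalIntegral.integral_mono_interval h1 zero_le_one h2
        (MeasureTheory.ae_of_all _ fun s => le_max_left _ _)
        ((htentc i).intervalIntegrable _ _)
    have hshift : (∫ s in (x i - 1)..(x i + 1), max 0 (c - |s - x i|))
        = ∫ u in (-1:ℝ)..1, max 0 (c - |u|) := by
      have := intervalIntegral.integral_comp_sub_right
        (a := x i - 1) (b := x i + 1) (fun u => max 0 (c - |u|)) (x i)
      rw [this]
      norm_num
    calc (∫ s in (0:ℝ)..1, max 0 (c - |s - x i|))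
        ≤ ∫ s in (x i - 1)..(x i + 1), max 0 (c - |s - x i|) := hmono
      _ = ∫ u in (-1:ℝ)..1, max 0 (c - |u|) := hshift
      _ = c^2 := my_tent_integral hc0 hc1
  -- main integral chain
  have hchain : 1/(4*(n:ℝ)) ≤ ∫ s in (0:ℝ)..1, f s := by
    have s1 : (∫ s in (0:ℝ)..1, min (f s) c) ≤ ∫ s in (0:ℝ)..1, f s := by
      apply intervalIntegral.integral_mono_on zero_le_one
        (hminc.intervalIntegrable _ _) (hcont.intervalIntegrable _ _)
      intro s _
      exact min_le_left _ _
    have s2 : (∫ s in (0:ℝ)..1, (c - ∑ i, max 0 (c - |s - x i|)))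
        ≤ ∫ s in (0:ℝ)..1, min (f s) c := by
      apply intervalIntegral.integral_mono_on zero_le_one
        ((continuous_const.sub hsumc).intervalIntegrable _ _)
        (hminc.intervalIntegrable _ _)
      intro s _
      exact hpt s
    have s3 : (∫ s in (0:ℝ)..1, (c - ∑ i, max 0 (c - |s - x i|)))
        = c - ∑ i, ∫ s in (0:ℝ)..1, max 0 (c - |s - x i|) := by
      rw [intervalIntegral.integral_sub (intervalIntegrable_const)
        (hsumc.intervalIntegrable _ _),
        intervalIntegral.integral_finset_sum
          (fun i _ => (htentc i).intervalIntegrable _ _)]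
      simp
    have s4 : c - ∑ i : Fin n, c^2 ≤ c - ∑ i, ∫ s in (0:ℝ)..1, max 0 (c - |s - x i|) := by
      have := Finset.sum_le_sum (fun i (_ : i ∈ Finset.univ) => htent i)
      linarith
    have s5 : c - ∑ _i : Fin n, c^2 = 1/(4*(n:ℝ)) := by
      rw [Finset.sum_const, Finset.card_univ, Fintype.card_fin, nsmul_eq_mul, hc]
      field_simp
      ring
    linarith [s1, s2, s3 ▸ s2, s4, s5 ▸ s4]
  refine ⟨f, hLip, ?_⟩
  have hzero : ∑ i, a i * f (x i) = 0 := by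
    simp [hf0]
  rw [hzero, sub_zero, abs_of_nonneg
    (intervalIntegral.integral_nonneg zero_le_one (fun u _ => hfnn u))]
  exact hchain

/-- Any quadrature rule with n nodes on [0,1] has worst case error at least 1/(4n)
on the class of 1-Lipschitz functions; consequently the midpoint rule with n nodes,
whose error is at most 1/(4n), is optimal for this class. -/
theorem quadrature_lower_bound_lipschitz (n : ℕ) (hn : 1 ≤ n)
    (x a : Fin n → ℝ) (hx : ∀ i, x i ∈ Set.Icc (0 : ℝ) 1) :
    (∃ f : ℝ → ℝ, (∀ y z : ℝ, |f y - f z| ≤ |y - z|) ∧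
      1 / (4 * n) ≤ |(∫ s in (0 : ℝ)..1, f s) - ∑ i, a i * f (x i)|) ∧
    (∀ g : ℝ → ℝ, (∀ y ∈ Set.Icc (0 : ℝ) 1, ∀ z ∈ Set.Icc (0 : ℝ) 1,
        |g y - g z| ≤ |y - z|) →
      |(∫ s in (0 : ℝ)..1, g s) -
          (1 / n) * ∑ i ∈ Finset.range n, g ((2 * i + 1) / (2 * n))| ≤ 1 / (4 * n)) := by
  exact ⟨my_lower n hn x a hx, fun g hg => my_midpoint n hn g hg⟩
end

section
/- Let F be a class of real-valued functions on a domain D that is symmetric (f ∈ F implies −f ∈ F) and convex. For the optimization problem OPT(f) = sup_{x∈D} f(x) and the L∞-approximation problem, the n-th minimal worst case errors using n adaptive function values satisfy e_n(F, APP)/2 ≤ e_n(F, OPT) ≤ e_n(F, APP). -/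
/-- The information (list of function values) computed by an adaptive algorithm whose
node-selection map is `next`, after `n` adaptive evaluations of `f`. -/
def runInfo {D : Type*} (next : List ℝ → D) (f : D → ℝ) : ℕ → List ℝ
  | 0 => []
  | n + 1 => runInfo next f n ++ [f (next (runInfo next f n))]

/-- The n-th minimal worst case error for optimization OPT(f) = sup_{x∈D} f(x),
over all (adaptive) algorithms using n function values. -/
noncomputable def errOPT {D : Type*} (n : ℕ) (F : Set (D → ℝ)) : ℝ :=
  sInf {e | 0 ≤ e ∧ ∃ (next : List ℝ → D) (out : List ℝ → ℝ),
    ∀ f ∈ F, |sSup (Set.range f) - out (runInfo next f n)| ≤ e}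

/-- The n-th minimal worst case error for L∞-approximation APP(f) = f,
over all (adaptive) algorithms using n function values. -/
noncomputable def errAPP {D : Type*} (n : ℕ) (F : Set (D → ℝ)) : ℝ :=
  sInf {e | 0 ≤ e ∧ ∃ (next : List ℝ → D) (out : List ℝ → (D → ℝ)),
    ∀ f ∈ F, ∀ x, |f x - out (runInfo next f n) x| ≤ e}

lemma runInfo_zero_path {D : Type*} (next : List ℝ → D) (f : D → ℝ) (m : ℕ) :
    runInfo (fun y => next (List.replicate y.length 0)) f m
      = (List.range m).map (fun k => f (next (List.replicate k 0))) := by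
  induction m with
  | zero => rfl
  | succ m ih =>
      rw [runInfo, ih, List.range_succ, List.map_append]
      simp

lemma runInfo_of_zeros {D : Type*} (next : List ℝ → D) (h : D → ℝ) (m : ℕ)
    (hz : ∀ k < m, h (next (List.replicate k 0)) = 0) :
    runInfo next h m = List.replicate m 0 := by
  induction m with
  | zero => rfl
  | succ m ih =>
      rw [runInfo, ih (fun k hk => hz k (Nat.lt_succ_of_lt hk)), List.replicate_succ',
        hz m (Nat.lt_succ_self m)]

lemma map_range_eq {g g' : ℕ → ℝ} {m k : ℕ}
    (h : (List.range m).map g = (List.range m).map g') (hk : k < m) : g k = g' k := by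
  have h1 := congrArg (fun l : List ℝ => l[k]?) h
  simpa [List.getElem?_map, List.getElem?_range, hk] using h1

/-- For a symmetric and convex class F of (bounded) real-valued functions on D, the
n-th minimal worst case errors for optimization and L∞-approximation satisfy
e_n(F, APP)/2 ≤ e_n(F, OPT) ≤ e_n(F, APP). -/
theorem opt_vs_app (D : Type*) [Nonempty D] (n : ℕ) (F : Set (D → ℝ))
    (hsym : ∀ f ∈ F, -f ∈ F) (hconv : Convex ℝ F)
    (hbdd : ∀ f ∈ F, BddAbove (Set.range f) ∧ BddBelow (Set.range f)) :
    errAPP n F / 2 ≤ errOPT n F ∧ errOPT n F ≤ errAPP n F := by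
  classical
  set SOPT := {e : ℝ | 0 ≤ e ∧ ∃ (next : List ℝ → D) (out : List ℝ → ℝ),
    ∀ f ∈ F, |sSup (Set.range f) - out (runInfo next f n)| ≤ e} with hSOPT
  set SAPP := {e : ℝ | 0 ≤ e ∧ ∃ (next : List ℝ → D) (out : List ℝ → (D → ℝ)),
    ∀ f ∈ F, ∀ x, |f x - out (runInfo next f n) x| ≤ e} with hSAPP
  have hOPT : errOPT n F = sInf SOPT := rfl
  have hAPP : errAPP n F = sInf SAPP := rfl
  -- Step 1 : SAPP ⊆ SOPT
  have hsub : SAPP ⊆ SOPT := by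
    rintro e ⟨he0, next, out, hout⟩
    refine ⟨he0, next, fun y => sSup (Set.range (out y)), fun f hf => ?_⟩
    set g := out (runInfo next f n) with hg
    have hfg : ∀ x, |f x - g x| ≤ e := hout f hf
    have hbf := (hbdd f hf).1
    have hne : (Set.range f).Nonempty := Set.range_nonempty f
    have hub : ∀ a ∈ Set.range g, a ≤ sSup (Set.range f) + e := by
      rintro _ ⟨x, rfl⟩
      have h1 := (abs_le.mp (hfg x)).1
      have hfx : f x ≤ sSup (Set.range f) := le_csSup hbf ⟨x, rfl⟩
      linarith
    have hbg : BddAbove (Set.range g) := ⟨sSup (Set.range f) + e, hub⟩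
    have hgn : (Set.range g).Nonempty := Set.range_nonempty g
    rw [abs_sub_le_iff]
    constructor
    · rw [sub_le_iff_le_add]
      refine csSup_le hne ?_
      rintro _ ⟨x, rfl⟩
      have h2 := (abs_le.mp (hfg x)).2
      have hgx : g x ≤ sSup (Set.range g) := le_csSup hbg ⟨x, rfl⟩
      linarith
    · rw [sub_le_iff_le_add]
      refine csSup_le hgn ?_
      rintro _ ⟨x, rfl⟩
      have h1 := (abs_le.mp (hfg x)).1
      have hfx : f x ≤ sSup (Set.range f) := le_csSup hbf ⟨x, rfl⟩
      linarith
  -- Step 2 : e ∈ SOPT → 2*e ∈ SAPP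
  have hdouble : ∀ e ∈ SOPT, (2 * e) ∈ SAPP := by
    rintro e ⟨he0, next, out, hE⟩
    set next₂ : List ℝ → D := fun y => next (List.replicate y.length 0) with hnext₂
    -- key pointwise bound for consistent functions
    have key : ∀ f ∈ F, ∀ g ∈ F, runInfo next₂ g n = runInfo next₂ f n →
        ∀ x, |g x - f x| ≤ 4 * e := by
      intro f hf g hg hgf x
      have hmem : ((1/2 : ℝ) • g + (1/2 : ℝ) • (-f)) ∈ F :=
        hconv hg (hsym f hf) (by norm_num) (by norm_num) (by norm_num)
      set h : D → ℝ := (1/2 : ℝ) • g + (1/2 : ℝ) • (-f) with hh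
      have hhx : ∀ x, h x = (g x - f x) / 2 := by
        intro x; simp [hh]; ring
      have hvan : ∀ k < n, h (next (List.replicate k 0)) = 0 := by
        intro k hk
        rw [runInfo_zero_path, runInfo_zero_path] at hgf
        have := map_range_eq hgf hk
        rw [hhx, this]; ring
      have hneg : (-h) ∈ F := hsym h hmem
      have hzero : (0 : D → ℝ) ∈ F := by
        have h0 : ((1/2 : ℝ) • h + (1/2 : ℝ) • (-h)) ∈ F :=
          hconv hmem hneg (by norm_num) (by norm_num) (by norm_num)
        have : ((1/2 : ℝ) • h + (1/2 : ℝ) • (-h)) = (0 : D → ℝ) := by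
          funext x; simp
        rwa [this] at h0
      have hrh : runInfo next h n = List.replicate n 0 := runInfo_of_zeros _ _ _ hvan
      have hrnh : runInfo next (-h) n = List.replicate n 0 :=
        runInfo_of_zeros _ _ _ (fun k hk => by simp [hvan k hk])
      have hr0 : runInfo next (0 : D → ℝ) n = List.replicate n 0 :=
        runInfo_of_zeros _ _ _ (fun k _ => rfl)
      have h1 := hE h hmem; rw [hrh] at h1
      have h2 := hE (-h) hneg; rw [hrnh] at h2
      have h3 := hE 0 hzero; rw [hr0] at h3
      have hsup0 : sSup (Set.range (0 : D → ℝ)) = 0 := by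
        have : Set.range (0 : D → ℝ) = {0} := by
          simp [Set.range_const]
        rw [this, csSup_singleton]
      rw [hsup0] at h3
      have hc := abs_le.mp (by simpa using h3 : |out (List.replicate n 0)| ≤ e)
      have hb1 : h x ≤ sSup (Set.range h) := le_csSup (hbdd h hmem).1 ⟨x, rfl⟩
      have hb2 : -(h x) ≤ sSup (Set.range (-h)) := by
        have : (-h) x ≤ sSup (Set.range (-h)) := le_csSup (hbdd _ hneg).1 ⟨x, rfl⟩
        simpa using this
      have e1 := abs_le.mp h1
      have e2 := abs_le.mp h2
      have habs : |h x| ≤ 2 * e := by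
        rw [abs_le]; constructor <;> [linarith [e2.2, hc.2]; linarith [e1.2, hc.2]]
      have : |g x - f x| = 2 * |h x| := by
        rw [hhx]; rw [abs_div]
        simp [abs_of_nonneg]
        ring
      rw [this]; linarith
    refine ⟨by linarith, next₂,
      fun y x => (sSup ((fun g => g x) '' {g | g ∈ F ∧ runInfo next₂ g n = y}) +
                  sInf ((fun g => g x) '' {g | g ∈ F ∧ runInfo next₂ g n = y})) / 2, ?_⟩
    intro f hf x
    set A := (fun g => g x) '' {g | g ∈ F ∧ runInfo next₂ g n = runInfo next₂ f n} with hA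
    have hfA : f x ∈ A := ⟨f, ⟨hf, rfl⟩, rfl⟩
    have hub : ∀ a ∈ A, a ≤ f x + 4 * e := by
      rintro a ⟨g, ⟨hg, hgi⟩, rfl⟩
      have := (abs_le.mp (key f hf g hg hgi x)).2
      linarith
    have hlb : ∀ a ∈ A, f x - 4 * e ≤ a := by
      rintro a ⟨g, ⟨hg, hgi⟩, rfl⟩
      have := (abs_le.mp (key f hf g hg hgi x)).1
      linarith
    have hAne : A.Nonempty := ⟨_, hfA⟩
    have h1 : sSup A ≤ f x + 4 * e := csSup_le hAne hub
    have h2 : f x - 4 * e ≤ sInf A := le_csInf hAne hlb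
    have h3 : f x ≤ sSup A := le_csSup ⟨f x + 4 * e, hub⟩ hfA
    have h4 : sInf A ≤ f x := csInf_le ⟨f x - 4 * e, hlb⟩ hfA
    rw [abs_le]
    constructor <;> [linarith; linarith]
  have hbb1 : BddBelow SOPT := ⟨0, fun e he => he.1⟩
  have hbb2 : BddBelow SAPP := ⟨0, fun e he => he.1⟩
  rw [hOPT, hAPP]
  by_cases hne : SAPP.Nonempty
  · have hone : SOPT.Nonempty := hne.mono hsub
    constructor
    · refine le_csInf hone ?_
      intro e he
      have := csInf_le hbb2 (hdouble e he)
      have he0 : 0 ≤ e := he.1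
      linarith
    · exact csInf_le_csInf hbb1 hne hsub
  · have hone : ¬ SOPT.Nonempty := fun ⟨e, he⟩ => hne ⟨2 * e, hdouble e he⟩
    rw [Set.not_nonempty_iff_eq_empty] at hne hone
    rw [hne, hone, Real.sInf_empty]
    norm_num
end
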